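/- Let B be the Baumslag–Solitar group BS(2,3), given by the presentation ⟨a, t ∣ t⁻¹a²t = a³⟩. Then there is a (necessarily unique) group endomorphism φ : B → B with φ(a) = a² and φ(t) = t; this endomorphism is surjective but not injective: the element c := [a, t⁻¹at] of B satisfies φ(c) = 1 and c ≠ 1. In particular, B is non-Hopfian. -/

import Mathlib

/-- The generator `a` of the Baumslag–Solitar group `BS(2,3)`,
as an element of the free group on `Bool` (`true ↦ a`, `false ↦ t`). -/
def bsA : FreeGroup Bool := FreeGroup.of true

/-- The generator `t` of the Baumslag–Solitar group `BS(2,3)`. -/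
def bsT : FreeGroup Bool := FreeGroup.of false

/-- The single relator `t⁻¹ a² t a⁻³` of `BS(2,3)`. -/
def bsRels : Set (FreeGroup Bool) := {bsT⁻¹ * bsA ^ 2 * bsT * bsA ^ (-3 : ℤ)}

/-- The Baumslag–Solitar group `BS(2,3) = ⟨a, t ∣ t⁻¹a²t = a³⟩`. -/
abbrev BS23 : Type := PresentedGroup bsRels

/-- The image of the generator `a` in `BS(2,3)`. -/
def aB : BS23 := PresentedGroup.of true

/-- The image of the generator `t` in `BS(2,3)`. -/
def tB : BS23 := PresentedGroup.of false

/-- The commutator with the convention `[x, y] := x⁻¹y⁻¹xy`. -/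
def pcomm {G : Type*} [Group G] (x y : G) : G := x⁻¹ * y⁻¹ * x * y

/-- The element `c := [a, t⁻¹at]` of `BS(2,3)`. -/
def cB : BS23 := pcomm aB (tB⁻¹ * aB * tB)

/-! ### Auxiliary material -/

lemma bsA_zpow : (bsA : FreeGroup Bool) ^ (-3 : ℤ) = (bsA ^ 3)⁻¹ := by
  rw [zpow_neg, ← zpow_natCast]; norm_num

/-- The defining relation, inside `BS(2,3)`. -/
lemma bs_rel : tB⁻¹ * aB ^ 2 * tB = aB ^ 3 := by
  have h1 : PresentedGroup.mk bsRels (bsT⁻¹ * bsA ^ 2 * bsT * bsA ^ (-3 : ℤ)) = 1 := by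
    apply (QuotientGroup.eq_one_iff _).mpr
    exact Subgroup.subset_normalClosure (by simp [bsRels])
  rw [bsA_zpow] at h1
  rw [← mul_inv_eq_one]
  simp only [map_mul, map_inv, map_pow] at h1
  exact h1

/-- The map on generators defining the endomorphism `φ`. -/
def phiGen : Bool → BS23 := fun b => if b then aB ^ 2 else tB

lemma phi_rel : ∀ r ∈ bsRels, FreeGroup.lift phiGen r = 1 := by
  intro r hr
  rw [bsRels, Set.mem_singleton_iff] at hr
  subst hr
  have e1 : FreeGroup.lift phiGen bsA = aB ^ 2 := FreeGroup.lift_apply_of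
  have e2 : FreeGroup.lift phiGen bsT = tB := FreeGroup.lift_apply_of
  have h4 : tB⁻¹ * (aB ^ 2) ^ 2 * tB = (aB ^ 2) ^ 3 := by
    have h5 : tB⁻¹ * (aB ^ 2) ^ 2 * tB
        = (tB⁻¹ * aB ^ 2 * tB) * (tB⁻¹ * aB ^ 2 * tB) := by group
    rw [h5, bs_rel]; group
  rw [bsA_zpow, map_mul, map_mul, map_mul, map_inv, map_inv, map_pow, map_pow, e1, e2,
    ← h4]
  group

/-- The endomorphism `φ : BS(2,3) → BS(2,3)`, `a ↦ a²`, `t ↦ t`. -/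
def phiHom : BS23 →* BS23 := PresentedGroup.toGroup phi_rel

lemma phi_a : phiHom aB = aB ^ 2 := PresentedGroup.toGroup.of phi_rel

lemma phi_t : phiHom tB = tB := PresentedGroup.toGroup.of phi_rel

lemma phi_c : phiHom cB = 1 := by
  simp only [cB, pcomm, map_mul, map_inv, phi_a, phi_t]
  calc (aB ^ 2)⁻¹ * (tB⁻¹ * aB ^ 2 * tB)⁻¹ * (aB ^ 2) * (tB⁻¹ * aB ^ 2 * tB)
      = (aB ^ 2)⁻¹ * (aB ^ 3)⁻¹ * (aB ^ 2) * (aB ^ 3) := by rw [bs_rel]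
    _ = 1 := by group

/-! ### A permutation representation of `BS(2,3)` on `ℤ × ℤ` in which
`c = [a, t⁻¹at]` acts nontrivially. -/

/-- `a` acts as the shift `(n, k) ↦ (n + 1, k)`. -/
def Xp : Equiv.Perm (ℤ × ℤ) :=
  ⟨fun p => (p.1 + 1, p.2), fun p => (p.1 - 1, p.2),
   fun p => by simp, fun p => by simp⟩

def yfun (p : ℤ × ℤ) : ℤ × ℤ :=
  (2 * (p.1 / 3) + (3 * p.2 + p.1 % 3) % 2, (3 * p.2 + p.1 % 3) / 2)

def yinv (p : ℤ × ℤ) : ℤ × ℤ :=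
  (3 * (p.1 / 2) + (2 * p.2 + p.1 % 2) % 3, (2 * p.2 + p.1 % 2) / 3)

/-- `t` acts as a bijection sending each orbit of `x³` equivariantly
onto an orbit of `x²`. -/
def Yp : Equiv.Perm (ℤ × ℤ) :=
  ⟨yfun, yinv,
   fun p => by
     obtain ⟨n, k⟩ := p
     simp only [yfun, yinv, Prod.mk.injEq]
     constructor <;> omega,
   fun p => by
     obtain ⟨n, k⟩ := p
     simp only [yfun, yinv, Prod.mk.injEq]
     constructor <;> omega⟩

lemma key_rel : Yp⁻¹ * Xp ^ 2 * Yp * Xp ^ (-3 : ℤ) = 1 := by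
  have h3 : Xp ^ (-3 : ℤ) = (Xp ^ 3)⁻¹ := by
    rw [zpow_neg, ← zpow_natCast]; norm_num
  rw [h3]
  have key : Xp ^ 2 * (Yp * (Xp ^ 3)⁻¹) = Yp := by
    apply Equiv.ext
    intro q
    obtain ⟨m, j⟩ := q
    show (Xp ^ 2) (Yp ((Xp ^ 3)⁻¹ (m, j))) = Yp (m, j)
    have hx3 : ((Xp ^ 3)⁻¹ : Equiv.Perm (ℤ × ℤ)) (m, j) = (m - 3, j) := by
      have h : (Xp ^ 3) (m - 3, j) = (m, j) := by
        show Xp (Xp (Xp (m - 3, j))) = (m, j)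
        simp [Xp]; ring
      rw [← h]; exact Equiv.symm_apply_apply _ _
    rw [hx3]
    show Xp (Xp (yfun (m - 3, j))) = yfun (m, j)
    simp only [Xp, yfun, Equiv.coe_fn_mk, Prod.mk.injEq]
    constructor <;> omega
  apply Equiv.ext
  intro p
  calc (Yp⁻¹ * Xp ^ 2 * Yp * (Xp ^ 3)⁻¹) p
      = Yp⁻¹ ((Xp ^ 2 * (Yp * (Xp ^ 3)⁻¹)) p) := by
        simp [mul_assoc, Equiv.Perm.mul_apply]
    _ = p := by rw [key]; exact Equiv.symm_apply_apply _ _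

/-- The map on generators defining the representation. -/
def repGen : Bool → Equiv.Perm (ℤ × ℤ) := fun b => if b then Xp else Yp

lemma rep_rel : ∀ r ∈ bsRels, FreeGroup.lift repGen r = 1 := by
  intro r hr
  rw [bsRels, Set.mem_singleton_iff] at hr
  subst hr
  have e1 : FreeGroup.lift repGen bsA = Xp := FreeGroup.lift_apply_of
  have e2 : FreeGroup.lift repGen bsT = Yp := FreeGroup.lift_apply_of
  rw [map_mul, map_mul, map_mul, map_inv, map_pow, map_zpow, e1, e2]
  exact key_rel

/-- The representation `BS(2,3) → Perm (ℤ × ℤ)`. -/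
def Frep : BS23 →* Equiv.Perm (ℤ × ℤ) := PresentedGroup.toGroup rep_rel

lemma Frep_a : Frep aB = Xp := PresentedGroup.toGroup.of rep_rel

lemma Frep_t : Frep tB = Yp := PresentedGroup.toGroup.of rep_rel

lemma cB_ne_one : cB ≠ 1 := by
  intro h
  have h2 : Frep cB = 1 := by rw [h, map_one]
  have h3 : Frep cB = pcomm Xp (Yp⁻¹ * Xp * Yp) := by
    simp only [cB, pcomm, map_mul, map_inv, Frep_a, Frep_t]
  rw [h3] at h2
  have h4 := congrArg (fun e : Equiv.Perm (ℤ × ℤ) => e ((0 : ℤ), (0 : ℤ))) h2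
  have h5 : (pcomm Xp (Yp⁻¹ * Xp * Yp)) ((0 : ℤ), (0 : ℤ)) = (-4, 1) := by decide
  simp only [h5, Equiv.Perm.one_apply, Prod.mk.injEq] at h4
  omega

/-- There is a unique group endomorphism `φ` of `BS(2,3)` with `φ(a) = a²` and
`φ(t) = t`; it is surjective but not injective: `c = [a, t⁻¹at]` satisfies
`φ(c) = 1` and `c ≠ 1`. In particular, `BS(2,3)` is non-Hopfian. -/
theorem bs23_nonHopfian :
    ∃ φ : BS23 →* BS23,
      (φ aB = aB ^ 2 ∧ φ tB = tB) ∧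
      (∀ ψ : BS23 →* BS23, ψ aB = aB ^ 2 → ψ tB = tB → ψ = φ) ∧
      Function.Surjective φ ∧ ¬ Function.Injective φ ∧
      φ cB = 1 ∧ cB ≠ 1 := by
  refine ⟨phiHom, ⟨phi_a, phi_t⟩, ?_, ?_, ?_, phi_c, cB_ne_one⟩
  · -- uniqueness
    intro ψ ha ht
    apply PresentedGroup.ext
    intro b
    cases b
    · show ψ tB = phiHom tB
      rw [ht, phi_t]
    · show ψ aB = phiHom aB
      rw [ha, phi_a]
  · -- surjectivity
    intro g
    have hmem : g ∈ phiHom.range := by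
      apply PresentedGroup.generated_by bsRels phiHom.range
      intro j
      cases j
      · exact ⟨tB, phi_t⟩
      · refine ⟨tB⁻¹ * aB * tB * aB⁻¹, ?_⟩
        show phiHom (tB⁻¹ * aB * tB * aB⁻¹) = aB
        rw [map_mul, map_mul, map_mul, map_inv, map_inv, phi_a, phi_t]
        calc tB⁻¹ * aB ^ 2 * tB * (aB ^ 2)⁻¹
            = aB ^ 3 * (aB ^ 2)⁻¹ := by rw [bs_rel]
          _ = aB := by group
    exact hmem
  · -- not injective
    intro hinj
    exact cB_ne_one (hinj (phi_c.trans (map_one phiHom).symm))
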